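/- Let (S, [·,·]_S, B_S) be a quadratic Lie algebra and D a B_S-skew-symmetric derivation of S. On the double extension S(D) = FD ⊕ S ⊕ Fℏ define the bilinear form B by B|_{S×S} = B_S, B(D,ℏ) = 1, B(S,D) = B(S,ℏ) = 0, B(D,D) = B(ℏ,ℏ) = 0. Then B is a nondegenerate invariant symmetric bilinear form on S(D). -/

import Mathlib

/-- The bracket of the double extension `S(D) = FD ⊕ S ⊕ Fℏ`. -/
def deBracket {F S : Type*} [Field F] [LieRing S] [LieAlgebra F S]
    (D : S →ₗ[F] S) (BS : LinearMap.BilinForm F S) :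
    F × S × F → F × S × F → F × S × F :=
  fun x y => (0, x.1 • D y.2.1 - y.1 • D x.2.1 + ⁅x.2.1, y.2.1⁆, BS (D x.2.1) y.2.1)

/-- The canonical bilinear form on the double extension `S(D) = FD ⊕ S ⊕ Fℏ`:
it restricts to `B_S` on `S`, `B(D,ℏ) = 1` and all other pairings vanish. -/
def deForm {F S : Type*} [Field F] [LieRing S] [LieAlgebra F S]
    (BS : LinearMap.BilinForm F S) : F × S × F → F × S × F → F :=
  fun x y => BS x.2.1 y.2.1 + x.1 * y.2.2 + x.2.2 * y.1

/-- The canonical bilinear form on the double extension `S(D)` of a quadratic Lie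
algebra `(S,B_S)` by a `B_S`-skew-symmetric derivation `D` is a nondegenerate
invariant symmetric bilinear form. -/
theorem double_extension_metric
    {F S : Type*} [Field F] [LieRing S] [LieAlgebra F S]
    (BS : LinearMap.BilinForm F S)
    (hsymm : ∀ x y : S, BS x y = BS y x)
    (hnondeg : BS.Nondegenerate)
    (hinv : ∀ x y z : S, BS ⁅x, y⁆ z = BS x ⁅y, z⁆)
    (D : S →ₗ[F] S)
    (hder : ∀ x y : S, D ⁅x, y⁆ = ⁅D x, y⁆ + ⁅x, D y⁆)
    (hDskew : ∀ x y : S, BS (D x) y = - BS x (D y)) :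
    (∀ x y : F × S × F, deForm BS x y = deForm BS y x) ∧
    (∀ x : F × S × F, (∀ y : F × S × F, deForm BS x y = 0) → x = 0) ∧
    (∀ x y z : F × S × F,
        deForm BS (deBracket D BS x y) z = deForm BS x (deBracket D BS y z)) := by
  refine ⟨fun x y => ?_, fun x hx => ?_, fun x y z => ?_⟩
  · simp only [deForm, hsymm x.2.1 y.2.1]; ring
  · have h2 : x.2.1 = 0 := hnondeg.1 x.2.1 fun s => by
      have := hx (0, s, 0); simpa [deForm] using this
    have h1 : x.1 = 0 := by have := hx (0, 0, 1); simpa [deForm] using this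
    have h3 : x.2.2 = 0 := by have := hx (1, 0, 0); simpa [deForm] using this
    exact Prod.ext h1 (Prod.ext h2 h3)
  · simp only [deForm, deBracket, map_add, map_sub, map_smul, LinearMap.add_apply,
      LinearMap.sub_apply, LinearMap.smul_apply, smul_eq_mul,
      hinv x.2.1 y.2.1 z.2.1, hDskew x.2.1 z.2.1, hDskew x.2.1 y.2.1]
    ring
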